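/- Let φ be a conjugacy-length-minimal automorphism of F_r with r ≥ 3 (no simultaneous conjugation shortens the total length of the images of the generators), and let w be a slender word, i.e., some generator x occurs (with exponent ±1) at most once in w. Then φ(w) does not contain any primitivity-blocking subword. -/

import Mathlib

open FreeGroup

/-- The free group of rank `r` on the basis `Fin r`. -/
abbrev F (r : ℕ) := FreeGroup (Fin r)

/-- `v` is a subword of `u`: the reduced word of `v` occurs as a contiguous
block of the reduced word of `u`. -/
def Subword {α : Type*} [DecidableEq α] (v u : FreeGroup α) : Prop :=
  v.toWord <:+: u.toWord

/-- `u` is cyclically reduced: the first letter of its reduced word is not the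
inverse of its last letter. -/
def CyclRed {α : Type*} [DecidableEq α] (u : FreeGroup α) : Prop :=
  ∀ a ∈ u.toWord.head?, ∀ b ∈ u.toWord.getLast?, a ≠ (b.1, !b.2)

/-- `u` is primitive: some automorphism sends a generator to `u`
(equivalently, `u` belongs to a basis). -/
def IsPrimitive {α : Type*} [DecidableEq α] (u : FreeGroup α) : Prop :=
  ∃ (φ : FreeGroup α ≃* FreeGroup α) (i : α), φ (FreeGroup.of i) = u

/-- `v` is primitivity-blocking: it is not a subword of any cyclically reduced
primitive element. -/
def PrimitivityBlocking {α : Type*} [DecidableEq α] (v : FreeGroup α) : Prop :=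
  ∀ u : FreeGroup α, IsPrimitive u → CyclRed u → ¬ Subword v u

/-- Reduced word length. -/
def len {α : Type*} [DecidableEq α] (u : FreeGroup α) : ℕ := u.toWord.length

/-- `v` is `w`-orbit-blocking: for every automorphism `φ`, `v` is not a subword
of the cyclic reduction of `φ w` (i.e. of any cyclically reduced element
conjugate to `φ w`). -/
def OrbitBlocking {α : Type*} [DecidableEq α] (w v : FreeGroup α) : Prop :=
  ∀ (φ : FreeGroup α ≃* FreeGroup α) (c : FreeGroup α),
    CyclRed c → IsConj c (φ w) → ¬ Subword v c

/-- A word is slender if some generator occurs (with exponent `±1`) at most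
once in its reduced word. -/
def Slender {α : Type*} [DecidableEq α] (w : FreeGroup α) : Prop :=
  ∃ x : α, (w.toWord.countP fun p => decide (p.1 = x)) ≤ 1


set_option linter.unusedSectionVars false

namespace Stmt17Aux

open List

variable {α : Type*} [DecidableEq α]

/-- inverse of a letter -/
def linv (a : α × Bool) : α × Bool := (a.1, !a.2)

@[simp] lemma linv_linv (a : α × Bool) : linv (linv a) = a := by simp [linv]

lemma linv_ne_self (a : α × Bool) : linv a ≠ a := by
  intro h
  have h2 : (!a.2) = a.2 := congrArg Prod.snd h
  exact Bool.not_ne_self _ h2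

lemma linv_eq_iff {a b : α × Bool} : linv a = b ↔ a = linv b := by
  constructor <;> rintro rfl <;> simp

/-- non-cancelling adjacency: `a` followed by `b` does not cancel. -/
def Rel (a b : α × Bool) : Prop := b ≠ linv a

lemma rel_iff {a b : α × Bool} : Rel a b ↔ ¬(a.1 = b.1 ∧ a.2 = !b.2) := by
  unfold Rel linv
  constructor
  · rintro h ⟨h1, h2⟩
    apply h
    ext
    · exact h1.symm
    · simp [h2]
  · intro h hb
    apply h
    subst hb
    simp

/-- reduced word -/
def RW (L : List (α × Bool)) : Prop := List.Chain' Rel L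

lemma rw_nil : RW ([] : List (α × Bool)) := List.isChain_nil

lemma rw_singleton (a : α × Bool) : RW [a] := List.isChain_singleton a

lemma reduce_of_rw {L : List (α × Bool)} (h : RW L) : reduce L = L := by
  induction L with
  | nil => rfl
  | cons a L ih =>
    have hL : RW L := h.tail
    rw [reduce.cons, ih hL]
    cases L with
    | nil => rfl
    | cons b L' =>
      have hab : Rel a b := (List.isChain_cons_cons.1 h).1
      simp only [rel_iff] at hab
      simp [if_neg hab]

lemma rw_reduce (L : List (α × Bool)) : RW (reduce L) := by
  induction L with
  | nil => exact rw_nil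
  | cons a L ih =>
    rw [reduce.cons]
    cases h : reduce L with
    | nil => exact rw_singleton a
    | cons b tl =>
      rw [h] at ih
      by_cases hc : a.1 = b.1 ∧ a.2 = !b.2
      · simp only [if_pos hc]
        exact ih.tail
      · simp only [if_neg hc]
        exact List.isChain_cons_cons.2 ⟨rel_iff.2 hc, ih⟩

lemma rw_toWord (g : FreeGroup α) : RW g.toWord := by
  have := rw_reduce (g.toWord)
  rwa [reduce_toWord] at this

lemma toWord_mk_of_rw {L : List (α × Bool)} (h : RW L) : (FreeGroup.mk L).toWord = L := by
  rw [toWord_mk, reduce_of_rw h]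

lemma toWord_mul_of_rw {g h : FreeGroup α} (H : RW (g.toWord ++ h.toWord)) :
    (g * h).toWord = g.toWord ++ h.toWord := by
  have e : g * h = FreeGroup.mk (g.toWord ++ h.toWord) := by
    rw [← mul_mk, mk_toWord, mk_toWord]
  rw [e, toWord_mk_of_rw H]

lemma invRev_eq (L : List (α × Bool)) : invRev L = (L.map linv).reverse := rfl

lemma rw_invRev {L : List (α × Bool)} (h : RW L) : RW (invRev L) := by
  rw [invRev_eq, RW]
  unfold List.Chain'
  rw [List.isChain_reverse]
  rw [List.isChain_map]
  refine h.imp ?_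
  intro a b hab
  intro hx
  exact hab (by rw [linv_eq_iff] at hx; rw [hx]; simp)

lemma head?_invRev (L : List (α × Bool)) : (invRev L).head? = L.getLast?.map linv := by
  rw [invRev_eq, List.head?_reverse, List.getLast?_map]

lemma getLast?_invRev (L : List (α × Bool)) : (invRev L).getLast? = L.head?.map linv := by
  rw [invRev_eq, List.getLast?_reverse, List.head?_map]


lemma of_eq_mk (i : α) : FreeGroup.of i = FreeGroup.mk [(i, true)] := rfl

lemma mk_single_inv (i : α) : FreeGroup.mk [(i, false)] = (FreeGroup.of i)⁻¹ := by
  rw [of_eq_mk, inv_mk]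
  rfl

lemma mk_single (i : α) (b : Bool) :
    FreeGroup.mk [(i, b)] = if b then FreeGroup.of i else (FreeGroup.of i)⁻¹ := by
  cases b
  · simp [mk_single_inv]
  · simp [of_eq_mk]

/-- `g` avoids the generator `x`. -/
def XF (x : α) (g : FreeGroup α) : Prop := ∀ p ∈ g.toWord, p.1 ≠ x

lemma xf_one (x : α) : XF x (1 : FreeGroup α) := by
  intro p hp
  rw [toWord_one] at hp
  cases hp

lemma xf_of {x j : α} (h : j ≠ x) : XF x (FreeGroup.of j) := by
  intro p hp
  rw [toWord_of, List.mem_singleton] at hp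
  subst hp
  exact h

lemma xf_inv {x : α} {g : FreeGroup α} (h : XF x g) : XF x g⁻¹ := by
  intro p hp
  rw [toWord_inv] at hp
  rw [invRev] at hp
  rcases List.mem_reverse.1 hp with hp
  rcases List.mem_map.1 hp with ⟨q, hq, rfl⟩
  exact h q hq

lemma xf_mul {x : α} {g h : FreeGroup α} (hg : XF x g) (hh : XF x h) : XF x (g * h) := by
  intro p hp
  have hsub := toWord_mul_sublist g h
  have := hsub.subset hp
  rcases List.mem_append.1 this with h' | h'
  · exact hg p h'
  · exact hh p h'

lemma xf_pow {x : α} {g : FreeGroup α} (hg : XF x g) (n : ℕ) : XF x (g ^ n) := by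
  induction n with
  | zero => simpa using xf_one x
  | succ n ih => rw [pow_succ]; exact xf_mul ih hg

lemma xf_mk {x : α} {L : List (α × Bool)} (h : ∀ p ∈ L, p.1 ≠ x) : XF x (FreeGroup.mk L) := by
  intro p hp
  rw [toWord_mk] at hp
  have : p ∈ L := (reduce.red (L := L)).sublist.subset hp
  exact h p this

/-- a homomorphism fixing all generators except possibly `x` fixes all `x`-free elements -/
lemma lift_fix {x : α} {f : α → FreeGroup α} (hf : ∀ t, t ≠ x → f t = FreeGroup.of t)
    {g : FreeGroup α} (hg : XF x g) : FreeGroup.lift f g = g := by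
  have key : ∀ L : List (α × Bool), (∀ p ∈ L, p.1 ≠ x) → FreeGroup.lift f (FreeGroup.mk L) = FreeGroup.mk L := by
    intro L
    induction L with
    | nil => intro _; rw [← one_eq_mk]; exact _root_.map_one _
    | cons p L ih =>
      intro hL
      have hp : p.1 ≠ x := hL p (List.mem_cons_self)
      have h1 : FreeGroup.mk (p :: L) = FreeGroup.mk [p] * FreeGroup.mk L := by
        rw [mul_mk]; rfl
      rw [h1, _root_.map_mul, ih (fun q hq => hL q (List.mem_cons_of_mem p hq))]
      congr 1
      rcases p with ⟨i, b⟩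
      cases b
      · rw [mk_single_inv, _root_.map_inv, FreeGroup.lift_apply_of, hf i hp]
      · rw [show FreeGroup.mk [(i, true)] = FreeGroup.of i from rfl, FreeGroup.lift_apply_of, hf i hp]
  calc FreeGroup.lift f g = FreeGroup.lift f (FreeGroup.mk g.toWord) := by rw [mk_toWord]
    _ = FreeGroup.mk g.toWord := key _ hg
    _ = g := mk_toWord

/-- the Nielsen-type automorphism sending `of x` to `C * mk [(x,η)] * D` and fixing
other generators, for `x`-free `C D`. -/
def nielsen (x : α) (η : Bool) (C D : FreeGroup α) (hC : XF x C) (hD : XF x D) :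
    FreeGroup α ≃* FreeGroup α := by
  refine MonoidHom.toMulEquiv
    (FreeGroup.lift fun t => if t = x then C * FreeGroup.mk [(x, η)] * D else FreeGroup.of t)
    (FreeGroup.lift fun t => if t = x then
        (if η then C⁻¹ * FreeGroup.of x * D⁻¹ else D * (FreeGroup.of x)⁻¹ * C)
      else FreeGroup.of t) ?_ ?_
  · apply FreeGroup.ext_hom
    intro a
    simp only [MonoidHom.comp_apply, MonoidHom.id_apply, FreeGroup.lift_apply_of]
    by_cases ha : a = x
    · subst ha
      rw [if_pos rfl]
      cases η
      · rw [mk_single_inv, _root_.map_mul, _root_.map_mul, _root_.map_inv,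
          FreeGroup.lift_apply_of, if_pos rfl,
          lift_fix (fun t ht => if_neg ht) hC, lift_fix (fun t ht => if_neg ht) hD]
        simp only [Bool.false_eq_true, if_false]
        group
      · rw [show FreeGroup.mk [(a, true)] = FreeGroup.of a from rfl, _root_.map_mul,
          _root_.map_mul, FreeGroup.lift_apply_of, if_pos rfl,
          lift_fix (fun t ht => if_neg ht) hC, lift_fix (fun t ht => if_neg ht) hD]
        simp only [if_true]
        group
    · rw [if_neg ha, FreeGroup.lift_apply_of, if_neg ha]
  · apply FreeGroup.ext_hom
    intro a
    simp only [MonoidHom.comp_apply, MonoidHom.id_apply, FreeGroup.lift_apply_of]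
    by_cases ha : a = x
    · subst ha
      rw [if_pos rfl]
      cases η
      · simp only [Bool.false_eq_true, if_false]
        rw [_root_.map_mul, _root_.map_mul, _root_.map_inv, FreeGroup.lift_apply_of, if_pos rfl,
          lift_fix (fun t ht => if_neg ht) hC, lift_fix (fun t ht => if_neg ht) hD,
          mk_single_inv]
        group
      · simp only [if_true]
        rw [_root_.map_mul, _root_.map_mul, _root_.map_inv, _root_.map_inv,
          FreeGroup.lift_apply_of, if_pos rfl,
          lift_fix (fun t ht => if_neg ht) hC, lift_fix (fun t ht => if_neg ht) hD,
          show FreeGroup.mk [(a, true)] = FreeGroup.of a from rfl]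
        group
    · rw [if_neg ha, FreeGroup.lift_apply_of, if_neg ha]

lemma nielsen_apply (x : α) (η : Bool) (C D : FreeGroup α) (hC : XF x C) (hD : XF x D)
    (g : FreeGroup α) :
    nielsen x η C D hC hD g =
      FreeGroup.lift (fun t => if t = x then C * FreeGroup.mk [(x, η)] * D
        else FreeGroup.of t) g := rfl

lemma nielsen_of (x : α) (η : Bool) (C D : FreeGroup α) (hC : XF x C) (hD : XF x D) :
    nielsen x η C D hC hD (FreeGroup.of x) = C * FreeGroup.mk [(x, η)] * D := by
  rw [nielsen_apply, FreeGroup.lift_apply_of, if_pos rfl]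

lemma nielsen_of_ne (x : α) (η : Bool) (C D : FreeGroup α) (hC : XF x C) (hD : XF x D)
    {t : α} (ht : t ≠ x) : nielsen x η C D hC hD (FreeGroup.of t) = FreeGroup.of t := by
  rw [nielsen_apply, FreeGroup.lift_apply_of, if_neg ht]


/-! ### common prefix and product lemmas -/

lemma exists_cp {γ : Type*} [DecidableEq γ] :
    ∀ (A B : List γ), ∃ S A' B', A = S ++ A' ∧ B = S ++ B' ∧
      ∀ a ∈ A'.head?, ∀ b ∈ B'.head?, a ≠ b := by
  intro A
  induction A with
  | nil => intro B; exact ⟨[], [], B, rfl, rfl, by simp⟩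
  | cons a A ih =>
    intro B
    cases B with
    | nil => exact ⟨[], a :: A, [], rfl, rfl, by simp⟩
    | cons b B =>
      by_cases hab : a = b
      · subst hab
        obtain ⟨S, A', B', h1, h2, h3⟩ := ih B
        exact ⟨a :: S, A', B', by simp [h1], by simp [h2], h3⟩
      · exact ⟨[], a :: A, b :: B, rfl, rfl, by simpa using hab⟩

lemma cp_toWord {p q : FreeGroup α} {S P' Q' : List (α × Bool)}
    (hp : p.toWord = S ++ P') (hq : q.toWord = S ++ Q')
    (hh : ∀ a ∈ P'.head?, ∀ b ∈ Q'.head?, a ≠ b) :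
    (p⁻¹ * q).toWord = invRev P' ++ Q' := by
  have hrwP : RW P' := by
    have h := rw_toWord p; rw [hp] at h; exact (List.isChain_append.1 h).2.1
  have hrwQ : RW Q' := by
    have h := rw_toWord q; rw [hq] at h; exact (List.isChain_append.1 h).2.1
  have halg : p⁻¹ * q = FreeGroup.mk (invRev P' ++ Q') := by
    have hp' : p = FreeGroup.mk S * FreeGroup.mk P' := by
      rw [mul_mk, ← hp, mk_toWord]
    have hq' : q = FreeGroup.mk S * FreeGroup.mk Q' := by
      rw [mul_mk, ← hq, mk_toWord]
    rw [hp', hq', ← mul_mk, ← inv_mk]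
    group
  rw [halg]
  apply toWord_mk_of_rw
  apply (rw_invRev hrwP).append hrwQ
  intro a ha b hb
  rw [getLast?_invRev] at ha
  rw [Option.mem_def, Option.map_eq_some_iff] at ha
  obtain ⟨a₀, ha₀, rfl⟩ := ha
  intro hbe
  rw [linv_linv] at hbe
  exact hh a₀ ha₀ b hb hbe.symm

lemma invRev_singleton (c : α × Bool) : invRev [c] = [linv c] := by
  simp [invRev_eq]

lemma mk_inv_letter (c : α × Bool) : (FreeGroup.mk [c])⁻¹ = FreeGroup.mk [linv c] := by
  rw [inv_mk, invRev_singleton]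

lemma getLast?_cons_ne_nil (a : α × Bool) {l : List (α × Bool)} (h : l ≠ []) :
    (a :: l).getLast? = l.getLast? := by
  have : a :: l = [a] ++ l := rfl
  rw [this, List.getLast?_append_of_ne_nil _ h]

/-! ### multiplying by a single letter -/

lemma mul_letter_cancel {v : FreeGroup α} {c : α × Bool}
    (h : v.toWord.getLast? = some (linv c)) :
    (v * FreeGroup.mk [c]).toWord = v.toWord.dropLast := by
  have hne : v.toWord ≠ [] := by intro h0; rw [h0] at h; cases h
  have hdec : v.toWord = v.toWord.dropLast ++ [linv c] := by
    conv_lhs => rw [← List.dropLast_append_getLast hne]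
    congr 2
    rw [List.getLast?_eq_getLast hne, Option.some_inj] at h
    exact h
  have hrw : RW (v.toWord.dropLast) := by
    have hr := rw_toWord v
    rw [hdec] at hr
    exact (List.isChain_append.1 hr).1
  have hv : v = FreeGroup.mk (v.toWord.dropLast) * FreeGroup.mk [linv c] := by
    rw [mul_mk, ← hdec, mk_toWord]
  have hc : FreeGroup.mk [linv c] * FreeGroup.mk [c] = 1 := by
    rw [← mk_inv_letter]; group
  have key : v * FreeGroup.mk [c] = FreeGroup.mk (v.toWord.dropLast) := by
    conv_lhs => rw [hv]
    rw [mul_assoc, hc, mul_one]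
  rw [key, toWord_mk_of_rw hrw]

lemma toWord_mk_letter (c : α × Bool) : (FreeGroup.mk [c]).toWord = [c] :=
  toWord_mk_of_rw (rw_singleton c)

lemma mul_letter_len_le (v : FreeGroup α) (c : α × Bool) :
    (v * FreeGroup.mk [c]).toWord.length ≤ v.toWord.length + 1 := by
  have hsub := FreeGroup.toWord_mul_sublist v (FreeGroup.mk [c])
  have hlen := hsub.length_le
  rw [List.length_append, toWord_mk_letter] at hlen
  simpa using hlen

lemma inv_letter_mul_cancel {u : FreeGroup α} {c : α × Bool}
    (h : u.toWord.head? = some c) :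
    ((FreeGroup.mk [c])⁻¹ * u).toWord = u.toWord.tail := by
  have hdec : u.toWord = c :: u.toWord.tail := List.eq_cons_of_mem_head? h
  have hrw : RW (u.toWord.tail) := by
    have hr := rw_toWord u
    rw [hdec] at hr
    exact hr.tail
  have hu : u = FreeGroup.mk [c] * FreeGroup.mk u.toWord.tail := by
    rw [mul_mk, List.singleton_append, ← hdec, mk_toWord]
  have key : (FreeGroup.mk [c])⁻¹ * u = FreeGroup.mk u.toWord.tail := by
    conv_lhs => rw [hu]
    rw [← mul_assoc, inv_mul_cancel, one_mul]
  rw [key, toWord_mk_of_rw hrw]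

lemma inv_letter_mul_word {u : FreeGroup α} {c : α × Bool}
    (hne : u.toWord ≠ []) (h : u.toWord.head? ≠ some c) :
    ((FreeGroup.mk [c])⁻¹ * u).toWord = linv c :: u.toWord := by
  have halg : (FreeGroup.mk [c])⁻¹ * u = FreeGroup.mk (linv c :: u.toWord) := by
    rw [mk_inv_letter]
    conv_lhs => rw [← mk_toWord (x := u)]
    rw [mul_mk]
    rfl
  rw [halg]
  apply toWord_mk_of_rw
  cases hL : u.toWord with
  | nil => exact absurd hL hne
  | cons p L' =>
    refine List.isChain_cons_cons.2 ⟨?_, ?_⟩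
    · intro hp
      rw [linv_linv] at hp
      apply h
      rw [hL, hp]
      rfl
    · have hr := rw_toWord u
      rw [hL] at hr
      exact hr

/-! ### length of conjugate by a letter -/

lemma conj_len_le (u : FreeGroup α) (hu : u ≠ 1) (c : α × Bool) :
    ((FreeGroup.mk [c])⁻¹ * u * FreeGroup.mk [c]).toWord.length
      + 2 * (if u.toWord.head? = some c then 1 else 0)
      + 2 * (if u.toWord.getLast? = some (linv c) then 1 else 0)
      ≤ u.toWord.length + 2 := by
  have hLne : u.toWord ≠ [] := fun h => hu (FreeGroup.toWord_eq_nil_iff.1 h)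
  set v := (FreeGroup.mk [c])⁻¹ * u with hv
  by_cases hs : u.toWord.head? = some c
  · -- head cancels
    have hvw : v.toWord = u.toWord.tail := inv_letter_mul_cancel hs
    have hdec : u.toWord = c :: u.toWord.tail := List.eq_cons_of_mem_head? hs
    by_cases he : u.toWord.getLast? = some (linv c)
    · -- last also cancels
      have htne : u.toWord.tail ≠ [] := by
        intro h0
        rw [h0] at hdec
        rw [hdec] at he
        simp only [List.getLast?_singleton, Option.some_inj] at he
        exact linv_ne_self c he.symm
      have hlast : v.toWord.getLast? = some (linv c) := by
        rw [hvw]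
        rw [hdec] at he
        rwa [getLast?_cons_ne_nil _ htne] at he
      have hthis := mul_letter_cancel (v := v) hlast
      rw [if_pos hs, if_pos he, hthis, List.length_dropLast, hvw, List.length_tail]
      have h2 : 2 ≤ u.toWord.length := by
        rw [hdec]
        simp only [List.length_cons]
        have : 1 ≤ u.toWord.tail.length := List.length_pos_iff.2 htne
        omega
      omega
    · rw [if_pos hs, if_neg he]
      have hlen := mul_letter_len_le v c
      rw [hvw, List.length_tail] at hlen
      have h1 : 1 ≤ u.toWord.length := List.length_pos_iff.2 hLne
      omega
  · -- head does not cancel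
    have hvw : v.toWord = linv c :: u.toWord := inv_letter_mul_word hLne hs
    by_cases he : u.toWord.getLast? = some (linv c)
    · have hlast : v.toWord.getLast? = some (linv c) := by
        rw [hvw, getLast?_cons_ne_nil _ hLne, he]
      have hthis := mul_letter_cancel (v := v) hlast
      rw [if_neg hs, if_pos he, hthis, List.length_dropLast, hvw]
      simp only [List.length_cons]
      omega
    · rw [if_neg hs, if_neg he]
      have hlen := mul_letter_len_le v c
      rw [hvw] at hlen
      simp only [List.length_cons] at hlen
      omega

/-! ### splitting a word with a unique occurrence -/

lemma count_one_split {γ : Type*} (pr : γ → Bool) :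
    ∀ (L : List γ), L.countP pr = 1 →
      ∃ L₁ a L₂, L = L₁ ++ a :: L₂ ∧ pr a = true ∧ (∀ b ∈ L₁, ¬ pr b) ∧ (∀ b ∈ L₂, ¬ pr b) := by
  intro L
  induction L with
  | nil => intro h; simp at h
  | cons a L ih =>
    intro h
    rw [List.countP_cons] at h
    by_cases hp : pr a
    · rw [if_pos hp] at h
      have h0 : L.countP pr = 0 := by omega
      exact ⟨[], a, L, rfl, hp, by simp, fun b hb => by
        have := List.countP_eq_zero.1 h0 b hb
        simpa using this⟩
    · rw [if_neg hp] at h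
      simp only [add_zero] at h
      obtain ⟨L₁, d, L₂, h1, h2, h3, h4⟩ := ih h
      refine ⟨a :: L₁, d, L₂, by rw [h1]; rfl, h2, ?_, h4⟩
      intro b hb
      rcases List.mem_cons.1 hb with rfl | hb
      · simpa using hp
      · exact h3 b hb

/-! ### the pair structure (Nielsen basis pairs) -/

def GPair {β : Type*} [DecidableEq β] (p q : FreeGroup β) : Prop :=
  ∃ σ : FreeGroup Bool →* FreeGroup β,
    Function.Injective σ ∧ σ (FreeGroup.of true) = p ∧ σ (FreeGroup.of false) = q

lemma pair_ne {β : Type*} [DecidableEq β] {p q : FreeGroup β} (h : GPair p q) : p ≠ q := by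
  obtain ⟨σ, hinj, hT, hF⟩ := h
  intro hpq
  have : FreeGroup.of true = FreeGroup.of false := hinj (by rw [hT, hF, hpq])
  have := FreeGroup.of_injective this
  cases this

lemma pair_swap {β : Type*} [DecidableEq β] {p q : FreeGroup β} (h : GPair p q) : GPair q p := by
  obtain ⟨σ, hinj, hT, hF⟩ := h
  set e : Bool ≃ Bool := ⟨Bool.not, Bool.not, Bool.not_not, Bool.not_not⟩ with he
  refine ⟨σ.comp (FreeGroup.freeGroupCongr e).toMonoidHom,
    hinj.comp (FreeGroup.freeGroupCongr e).injective, ?_, ?_⟩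
  · have : (FreeGroup.freeGroupCongr e) (FreeGroup.of true) = FreeGroup.of false := by
      simp [he]
    simp only [MonoidHom.comp_apply, MulEquiv.coe_toMonoidHom]
    rw [this, hF]
  · have : (FreeGroup.freeGroupCongr e) (FreeGroup.of false) = FreeGroup.of true := by
      simp [he]
    simp only [MonoidHom.comp_apply, MulEquiv.coe_toMonoidHom]
    rw [this, hT]

lemma pair_move1 {β : Type*} [DecidableEq β] {p q : FreeGroup β} (h : GPair p q) :
    GPair p (p⁻¹ * q) := by
  obtain ⟨σ, hinj, hT, hF⟩ := h
  have hC : XF false ((FreeGroup.of true)⁻¹ : FreeGroup Bool) :=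
    xf_inv (xf_of (by decide))
  have hD : XF false (1 : FreeGroup Bool) := xf_one false
  set ν := nielsen false true ((FreeGroup.of true)⁻¹) 1 hC hD with hν
  refine ⟨σ.comp ν.toMonoidHom, hinj.comp ν.injective, ?_, ?_⟩
  · simp only [MonoidHom.comp_apply, MulEquiv.coe_toMonoidHom]
    rw [hν, nielsen_of_ne _ _ _ _ _ _ (by decide : (true : Bool) ≠ false), hT]
  · simp only [MonoidHom.comp_apply, MulEquiv.coe_toMonoidHom]
    rw [hν, nielsen_of]
    rw [show (FreeGroup.mk [(false, true)] : FreeGroup Bool) = FreeGroup.of false from rfl]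
    rw [mul_one, _root_.map_mul, _root_.map_inv, hT, hF]

lemma pair_move2 {β : Type*} [DecidableEq β] {p q : FreeGroup β} (h : GPair p q) (n : ℕ) :
    GPair (p * q ^ n) q := by
  obtain ⟨σ, hinj, hT, hF⟩ := h
  have hC : XF true (1 : FreeGroup Bool) := xf_one true
  have hD : XF true ((FreeGroup.of false) ^ n : FreeGroup Bool) :=
    xf_pow (xf_of (by decide)) n
  set ν := nielsen true true 1 ((FreeGroup.of false) ^ n) hC hD with hν
  refine ⟨σ.comp ν.toMonoidHom, hinj.comp ν.injective, ?_, ?_⟩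
  · simp only [MonoidHom.comp_apply, MulEquiv.coe_toMonoidHom]
    rw [hν, nielsen_of]
    rw [show (FreeGroup.mk [(true, true)] : FreeGroup Bool) = FreeGroup.of true from rfl]
    rw [one_mul, _root_.map_mul, _root_.map_pow, hT, hF]
  · simp only [MonoidHom.comp_apply, MulEquiv.coe_toMonoidHom]
    rw [hν, nielsen_of_ne _ _ _ _ _ _ (by decide : (false : Bool) ≠ true), hF]

lemma pair_inv_right {β : Type*} [DecidableEq β] {p q : FreeGroup β} (h : GPair p q) :
    GPair p q⁻¹ := by
  obtain ⟨σ, hinj, hT, hF⟩ := h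
  have hC : XF false (1 : FreeGroup Bool) := xf_one false
  set ν := nielsen false false 1 1 hC hC with hν
  refine ⟨σ.comp ν.toMonoidHom, hinj.comp ν.injective, ?_, ?_⟩
  · simp only [MonoidHom.comp_apply, MulEquiv.coe_toMonoidHom]
    rw [hν, nielsen_of_ne _ _ _ _ _ _ (by decide : (true : Bool) ≠ false), hT]
  · simp only [MonoidHom.comp_apply, MulEquiv.coe_toMonoidHom]
    rw [hν, nielsen_of, mk_single_inv, one_mul, mul_one, _root_.map_inv, hF]

lemma pair_init {β : Type*} [DecidableEq β] {j₁ j₀ : β} (hne : j₁ ≠ j₀) :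
    GPair (FreeGroup.of j₁) (FreeGroup.of j₀) := by
  set σ : FreeGroup Bool →* FreeGroup β :=
    FreeGroup.lift (fun b => if b then FreeGroup.of j₁ else FreeGroup.of j₀) with hσ
  set τ : FreeGroup β →* FreeGroup Bool :=
    FreeGroup.lift (fun i => if i = j₁ then FreeGroup.of true
      else if i = j₀ then FreeGroup.of false else 1) with hτ
  have hcomp : ∀ z, τ (σ z) = z := by
    have : τ.comp σ = MonoidHom.id (FreeGroup Bool) := by
      apply FreeGroup.ext_hom
      intro a
      simp only [MonoidHom.comp_apply, MonoidHom.id_apply, hσ, hτ, FreeGroup.lift_apply_of]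
      cases a
      · simp only [if_false, Bool.false_eq_true]
        rw [FreeGroup.lift_apply_of, if_neg (Ne.symm hne), if_pos rfl]
      · simp only [if_true]
        rw [FreeGroup.lift_apply_of, if_pos rfl]
    intro z
    calc τ (σ z) = (τ.comp σ) z := rfl
      _ = z := by rw [this]; rfl
  refine ⟨σ, ?_, ?_, ?_⟩
  · intro u v huv
    rw [← hcomp u, ← hcomp v, huv]
  · rw [hσ, FreeGroup.lift_apply_of, if_pos rfl]
  · rw [hσ, FreeGroup.lift_apply_of]; rfl

lemma exists_distinct {r : ℕ} (hr : 3 ≤ r) (x j : Fin r) : ∃ k : Fin r, k ≠ x ∧ k ≠ j := by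
  by_contra hno
  push_neg at hno
  have hsub : (Finset.univ : Finset (Fin r)) ⊆ {x, j} := by
    intro k _
    simp only [Finset.mem_insert, Finset.mem_singleton]
    rcases eq_or_ne k x with h | h
    · exact Or.inl h
    · exact Or.inr (hno k h)
  have h1 := Finset.card_le_card hsub
  have h2 : ({x, j} : Finset (Fin r)).card ≤ 2 := (Finset.card_insert_le _ _).trans (by simp)
  simp only [Finset.card_univ, Fintype.card_fin] at h1
  omega

/-! ### more option/word helpers -/

lemma word_ne_nil_of_head {g : FreeGroup α} {c : α × Bool} (h : g.toWord.head? = some c) :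
    g.toWord ≠ [] := by intro h0; rw [h0] at h; cases h

lemma head?_toWord_inv (g : FreeGroup α) : (g⁻¹).toWord.head? = g.toWord.getLast?.map linv := by
  rw [FreeGroup.toWord_inv, head?_invRev]

lemma getLast?_toWord_inv (g : FreeGroup α) :
    (g⁻¹).toWord.getLast? = g.toWord.head?.map linv := by
  rw [FreeGroup.toWord_inv, getLast?_invRev]

lemma map_linv_eq_some {o : Option (α × Bool)} {cc : α × Bool} :
    o.map linv = some cc ↔ o = some (linv cc) := by
  cases o with
  | none => simp
  | some p =>
    simp only [Option.map_some, Option.some_inj]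
    constructor
    · intro h; rw [← h, linv_linv]
    · intro h; rw [h, linv_linv]

section Main

variable {r : ℕ} (φ : FreeGroup (Fin r) ≃* FreeGroup (Fin r)) (x : Fin r)

lemma phi_of_ne_one (i : Fin r) : φ (FreeGroup.of i) ≠ 1 := by
  intro h0
  exact FreeGroup.of_ne_one i (φ.injective (by rw [h0, _root_.map_one]))

/-- consequence of conjugacy-minimality at the single letter `c`. -/
lemma count_bound
    (hmin : ∀ g : FreeGroup (Fin r), (∑ i, (φ (FreeGroup.of i)).toWord.length) ≤
      ∑ i, (g⁻¹ * φ (FreeGroup.of i) * g).toWord.length) (c : Fin r × Bool) :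
    (∑ i, ((if (φ (FreeGroup.of i)).toWord.head? = some c then 1 else 0)
      + (if (φ (FreeGroup.of i)).toWord.getLast? = some (linv c) then 1 else 0))) ≤ r := by
  classical
  have h2 : ∀ i ∈ (Finset.univ : Finset (Fin r)),
      ((FreeGroup.mk [c])⁻¹ * φ (FreeGroup.of i) * FreeGroup.mk [c]).toWord.length
        + 2 * (if (φ (FreeGroup.of i)).toWord.head? = some c then 1 else 0)
        + 2 * (if (φ (FreeGroup.of i)).toWord.getLast? = some (linv c) then 1 else 0)
      ≤ (φ (FreeGroup.of i)).toWord.length + 2 :=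
    fun i _ => conj_len_le _ (phi_of_ne_one φ i) c
  have h3 := Finset.sum_le_sum h2
  have h1 := hmin (FreeGroup.mk [c])
  rw [Finset.sum_add_distrib, Finset.sum_add_distrib, ← Finset.mul_sum, ← Finset.mul_sum,
    Finset.sum_add_distrib, Finset.sum_const, Finset.card_univ, Fintype.card_fin,
    smul_eq_mul] at h3
  rw [Finset.sum_add_distrib]
  omega

lemma not_all_both (hr : 3 ≤ r)
    (hmin : ∀ g : FreeGroup (Fin r), (∑ i, (φ (FreeGroup.of i)).toWord.length) ≤
      ∑ i, (g⁻¹ * φ (FreeGroup.of i) * g).toWord.length) (c : Fin r × Bool) :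
    ¬ (∀ j : Fin r, j ≠ x → ((φ (FreeGroup.of j)).toWord.head? = some c ∧
        (φ (FreeGroup.of j)).toWord.getLast? = some (linv c))) := by
  intro hall
  have hc := count_bound φ hmin c
  have h4 : ∀ j ∈ Finset.univ.erase x,
      2 ≤ (if (φ (FreeGroup.of j)).toWord.head? = some c then 1 else 0)
        + (if (φ (FreeGroup.of j)).toWord.getLast? = some (linv c) then 1 else 0) := by
    intro j hj
    obtain ⟨h5, h6⟩ := hall j (Finset.ne_of_mem_erase hj)
    rw [if_pos h5, if_pos h6]
  have h5 := Finset.sum_le_sum h4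
  have h6 : (∑ j ∈ Finset.univ.erase x,
      ((if (φ (FreeGroup.of j)).toWord.head? = some c then 1 else 0)
        + (if (φ (FreeGroup.of j)).toWord.getLast? = some (linv c) then 1 else 0)))
      ≤ ∑ j : Fin r, ((if (φ (FreeGroup.of j)).toWord.head? = some c then 1 else 0)
        + (if (φ (FreeGroup.of j)).toWord.getLast? = some (linv c) then 1 else 0)) := by
    apply Finset.sum_le_sum_of_subset (Finset.subset_univ _)
  rw [Finset.sum_const, Finset.card_erase_of_mem (Finset.mem_univ x), Finset.card_univ,
    Fintype.card_fin, smul_eq_mul] at h5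
  omega

/-- Nielsen descent: no basis pair can consist of two "A-only" elements when all
`x`-free elements are bad for the letter `c`. -/
lemma no_pair_aonly (c : Fin r × Bool)
    (hbad : ∀ E : FreeGroup (Fin r), XF x E → E ≠ 1 →
      (φ E).toWord.head? = some c ∨ (φ E).toWord.getLast? = some (linv c)) :
    ∀ N : ℕ, ∀ Ep Eq : FreeGroup (Fin r), GPair Ep Eq →
      XF x Ep → XF x Eq →
      (φ Ep).toWord.head? = some c → (φ Ep).toWord.getLast? ≠ some (linv c) →
      (φ Eq).toWord.head? = some c → (φ Eq).toWord.getLast? ≠ some (linv c) →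
      (φ Ep).toWord.length + (φ Eq).toWord.length ≤ N → False := by
  intro N
  induction N with
  | zero =>
    intro Ep Eq _ _ _ hph _ _ _ hlen
    have h1 : (φ Ep).toWord ≠ [] := word_ne_nil_of_head hph
    have := List.length_pos_iff.2 h1
    omega
  | succ N ih =>
    intro Ep Eq hpair hxp hxq hph hpl hqh hql hlen
    obtain ⟨S, P', Q', hSp, hSq, hhd⟩ := exists_cp (φ Ep).toWord (φ Eq).toWord
    have hcp : (φ (Ep⁻¹ * Eq)).toWord = invRev P' ++ Q' := by
      rw [_root_.map_mul, _root_.map_inv]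
      exact cp_toWord hSp hSq hhd
    have hWpne : (φ Ep).toWord ≠ [] := word_ne_nil_of_head hph
    have hWqne : (φ Eq).toWord ≠ [] := word_ne_nil_of_head hqh
    by_cases hP : P' = []
    · by_cases hQ : Q' = []
      · apply pair_ne hpair
        apply φ.injective
        apply FreeGroup.toWord_injective
        rw [hSp, hSq, hP, hQ]
      · have hword : (φ (Ep⁻¹ * Eq)).toWord = Q' := by
          rw [hcp, hP, invRev_empty, List.nil_append]
        have hlast : (φ (Ep⁻¹ * Eq)).toWord.getLast? ≠ some (linv c) := by
          rw [hword]
          intro hsome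
          apply hql
          rw [hSq, List.getLast?_append_of_ne_nil _ hQ, hsome]
        have hne1 : Ep⁻¹ * Eq ≠ 1 := by
          intro h0
          have h1 : (φ (Ep⁻¹ * Eq)).toWord = [] := by rw [h0, _root_.map_one, FreeGroup.toWord_one]
          rw [hword] at h1
          exact hQ h1
        have hxh : XF x (Ep⁻¹ * Eq) := xf_mul (xf_inv hxp) hxq
        have hhead : (φ (Ep⁻¹ * Eq)).toWord.head? = some c := by
          rcases hbad _ hxh hne1 with h' | h'
          · exact h'
          · exact absurd h' hlast
        have hl1 : (φ Ep).toWord.length = S.length := by rw [hSp, hP, List.append_nil]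
        have hl2 : (φ Eq).toWord.length = S.length + Q'.length := by
          rw [hSq, List.length_append]
        have hl3 : (φ (Ep⁻¹ * Eq)).toWord.length = Q'.length := by rw [hword]
        have hp1 : 1 ≤ (φ Ep).toWord.length := List.length_pos_iff.2 hWpne
        exact ih Ep (Ep⁻¹ * Eq) (pair_move1 hpair) hxp hxh hph hpl hhead hlast (by omega)
    · by_cases hQ : Q' = []
      · have hinv : Eq⁻¹ * Ep = (Ep⁻¹ * Eq)⁻¹ := by group
        have hword : (φ (Eq⁻¹ * Ep)).toWord = P' := by
          rw [hinv, _root_.map_inv, FreeGroup.toWord_inv, hcp, hQ, List.append_nil,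
            invRev_invRev]
        have hlastP : (φ (Eq⁻¹ * Ep)).toWord.getLast? ≠ some (linv c) := by
          rw [hword]
          intro hsome
          apply hpl
          rw [hSp, List.getLast?_append_of_ne_nil _ hP, hsome]
        have hne1 : Eq⁻¹ * Ep ≠ 1 := by
          intro h0
          have h1 : (φ (Eq⁻¹ * Ep)).toWord = [] := by rw [h0, _root_.map_one, FreeGroup.toWord_one]
          rw [hword] at h1
          exact hP h1
        have hxh : XF x (Eq⁻¹ * Ep) := xf_mul (xf_inv hxq) hxp
        have hheadP : (φ (Eq⁻¹ * Ep)).toWord.head? = some c := by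
          rcases hbad _ hxh hne1 with h' | h'
          · exact h'
          · exact absurd h' hlastP
        have hl1 : (φ Eq).toWord.length = S.length := by rw [hSq, hQ, List.append_nil]
        have hl2 : (φ Ep).toWord.length = S.length + P'.length := by
          rw [hSp, List.length_append]
        have hl3 : (φ (Eq⁻¹ * Ep)).toWord.length = P'.length := by rw [hword]
        have hq1 : 1 ≤ (φ Eq).toWord.length := List.length_pos_iff.2 hWqne
        exact ih Eq (Eq⁻¹ * Ep) (pair_move1 (pair_swap hpair)) hxq hxh hqh hql hheadP hlastP
          (by omega)
      · have hinvne : invRev P' ≠ [] := by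
          intro h0
          have h1 := congrArg List.length h0
          rw [invRev_length] at h1
          exact hP (List.length_eq_zero_iff.1 h1)
        have hne1 : Ep⁻¹ * Eq ≠ 1 := by
          intro h0
          have h1 : (φ (Ep⁻¹ * Eq)).toWord = [] := by rw [h0, _root_.map_one, FreeGroup.toWord_one]
          rw [hcp] at h1
          rcases List.append_eq_nil_iff.1 h1 with ⟨h2, -⟩
          exact hinvne h2
        have hhead : (φ (Ep⁻¹ * Eq)).toWord.head? ≠ some c := by
          rw [hcp, List.head?_append_of_ne_nil _ hinvne, head?_invRev]
          intro hsome
          rw [map_linv_eq_some] at hsome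
          apply hpl
          rw [hSp, List.getLast?_append_of_ne_nil _ hP, hsome]
        have hlast : (φ (Ep⁻¹ * Eq)).toWord.getLast? ≠ some (linv c) := by
          rw [hcp, List.getLast?_append_of_ne_nil _ hQ]
          intro hsome
          apply hql
          rw [hSq, List.getLast?_append_of_ne_nil _ hQ, hsome]
        rcases hbad _ (xf_mul (xf_inv hxp) hxq) hne1 with h' | h'
        · exact hhead h'
        · exact hlast h'

lemma pow_word_aonly {E : FreeGroup (Fin r)} {c : Fin r × Bool}
    (hh : (φ E).toWord.head? = some c) (hl : (φ E).toWord.getLast? ≠ some (linv c)) :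
    ∀ n : ℕ, 1 ≤ n →
      (φ (E ^ n)).toWord.head? = some c ∧
      (φ (E ^ n)).toWord.getLast? = (φ E).toWord.getLast? ∧
      (φ (E ^ n)).toWord.length = n * (φ E).toWord.length := by
  intro n
  induction n with
  | zero => intro h; omega
  | succ n ihn =>
    intro _
    by_cases hn : n = 0
    · subst hn
      rw [pow_one]
      exact ⟨hh, rfl, by omega⟩
    · have hn1 : 1 ≤ n := Nat.one_le_iff_ne_zero.2 hn
      obtain ⟨ih1, ih2, ih3⟩ := ihn hn1
      have hmul : φ (E ^ (n + 1)) = φ E * φ (E ^ n) := by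
        rw [← _root_.map_mul, ← pow_succ']
      have hWne : (φ E).toWord ≠ [] := word_ne_nil_of_head hh
      have hprevne : (φ (E ^ n)).toWord ≠ [] := word_ne_nil_of_head ih1
      have hcat : (φ (E ^ (n + 1))).toWord = (φ E).toWord ++ (φ (E ^ n)).toWord := by
        rw [hmul]
        apply toWord_mul_of_rw
        apply (rw_toWord _).append (rw_toWord _)
        intro p hp y hy
        rw [ih1, Option.mem_def, Option.some_inj] at hy
        subst hy
        intro hyc
        apply hl
        have hple : p = linv c := by rw [hyc]; simp
        rw [Option.mem_def] at hp
        rw [hp, hple]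
      refine ⟨?_, ?_, ?_⟩
      · rw [hcat, List.head?_append_of_ne_nil _ hWne, hh]
      · rw [hcat, List.getLast?_append_of_ne_nil _ hprevne, ih2]
      · rw [hcat, List.length_append, ih3]
        ring

lemma matched_core (c : Fin r × Bool)
    (hbad : ∀ E : FreeGroup (Fin r), XF x E → E ≠ 1 →
      (φ E).toWord.head? = some c ∨ (φ E).toWord.getLast? = some (linv c))
    (k : Fin r) (hkx : k ≠ x) (E₂ : FreeGroup (Fin r))
    (hpair : GPair (FreeGroup.of k) E₂) (hxf2 : XF x E₂)
    (hh2 : (φ E₂).toWord.head? = some c) (hl2 : (φ E₂).toWord.getLast? ≠ some (linv c)) :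
    False := by
  set n := (φ (FreeGroup.of k)).toWord.length + 1 with hn
  obtain ⟨hph, hpl, hplen⟩ := pow_word_aonly φ hh2 hl2 n (by omega)
  obtain ⟨S, P', Q', hSp, hSq, hhd⟩ :=
    exists_cp (φ ((FreeGroup.of k)⁻¹)).toWord (φ (E₂ ^ n)).toWord
  have hcp : (φ (FreeGroup.of k * E₂ ^ n)).toWord = invRev P' ++ Q' := by
    have heq : φ (FreeGroup.of k * E₂ ^ n) = (φ ((FreeGroup.of k)⁻¹))⁻¹ * φ (E₂ ^ n) := by
      rw [_root_.map_inv, inv_inv, ← _root_.map_mul]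
    rw [heq]
    exact cp_toWord hSp hSq hhd
  have hlenS : S.length ≤ (φ (FreeGroup.of k)).toWord.length := by
    have h1 := congrArg List.length hSp
    rw [_root_.map_inv, FreeGroup.toWord_inv, invRev_length, List.length_append] at h1
    omega
  have hW2pos : 1 ≤ (φ E₂).toWord.length := List.length_pos_iff.2 (word_ne_nil_of_head hh2)
  have hQlen : S.length + Q'.length = n * (φ E₂).toWord.length := by
    have h1 := congrArg List.length hSq
    rw [hplen, List.length_append] at h1
    omega
  have hQne : Q' ≠ [] := by
    intro h0
    rw [h0] at hQlen
    simp only [List.length_nil, add_zero] at hQlen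
    have h2 : n ≤ n * (φ E₂).toWord.length := Nat.le_mul_of_pos_right n hW2pos
    omega
  have hlast : (φ (FreeGroup.of k * E₂ ^ n)).toWord.getLast? ≠ some (linv c) := by
    rw [hcp, List.getLast?_append_of_ne_nil _ hQne]
    intro hsome
    apply hl2
    rw [← hpl, hSq, List.getLast?_append_of_ne_nil _ hQne, hsome]
  have hne1 : FreeGroup.of k * E₂ ^ n ≠ 1 := by
    intro h0
    have h1 : (φ (FreeGroup.of k * E₂ ^ n)).toWord = [] := by
      rw [h0, _root_.map_one, FreeGroup.toWord_one]
    rw [hcp] at h1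
    rcases List.append_eq_nil_iff.1 h1 with ⟨-, h2⟩
    exact hQne h2
  have hxfh : XF x (FreeGroup.of k * E₂ ^ n) := xf_mul (xf_of hkx) (xf_pow hxf2 n)
  have hhead : (φ (FreeGroup.of k * E₂ ^ n)).toWord.head? = some c := by
    rcases hbad _ hxfh hne1 with h' | h'
    · exact h'
    · exact absurd h' hlast
  exact no_pair_aonly φ x c hbad
    ((φ (FreeGroup.of k * E₂ ^ n)).toWord.length + (φ E₂).toWord.length)
    (FreeGroup.of k * E₂ ^ n) E₂ (pair_move2 hpair n) hxfh hxf2 hhead hlast hh2 hl2 le_rfl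

lemma exists_good_matched (hr : 3 ≤ r)
    (hmin : ∀ g : FreeGroup (Fin r), (∑ i, (φ (FreeGroup.of i)).toWord.length) ≤
      ∑ i, (g⁻¹ * φ (FreeGroup.of i) * g).toWord.length) (c : Fin r × Bool) :
    ∃ E : FreeGroup (Fin r), XF x E ∧ E ≠ 1 ∧
      (φ E).toWord.head? ≠ some c ∧ (φ E).toWord.getLast? ≠ some (linv c) := by
  by_contra hno
  push_neg at hno
  have hbad : ∀ E : FreeGroup (Fin r), XF x E → E ≠ 1 →
      (φ E).toWord.head? = some c ∨ (φ E).toWord.getLast? = some (linv c) := by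
    intro E h1 h2
    by_cases hh : (φ E).toWord.head? = some c
    · exact Or.inl hh
    · exact Or.inr (hno E h1 h2 hh)
  have hnab := not_all_both φ x hr hmin c
  push_neg at hnab
  obtain ⟨j, hjx, hjnb⟩ := hnab
  obtain ⟨k, hkx, hkj⟩ := exists_distinct hr x j
  have hpair0 : GPair (FreeGroup.of k) (FreeGroup.of j) := pair_init hkj
  by_cases hh : (φ (FreeGroup.of j)).toWord.head? = some c
  · -- A-only generator
    have hl : (φ (FreeGroup.of j)).toWord.getLast? ≠ some (linv c) := by
      intro h0
      exact hjnb hh h0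
    exact matched_core φ x c hbad k hkx (FreeGroup.of j) hpair0 (xf_of hjx) hh hl
  · -- B-only generator: invert
    have hlj : (φ (FreeGroup.of j)).toWord.getLast? = some (linv c) := by
      rcases hbad (FreeGroup.of j) (xf_of hjx) (FreeGroup.of_ne_one j) with h' | h'
      · exact absurd h' hh
      · exact h'
    have hh2 : (φ ((FreeGroup.of j)⁻¹)).toWord.head? = some c := by
      rw [_root_.map_inv, head?_toWord_inv, hlj]
      simp
    have hl2 : (φ ((FreeGroup.of j)⁻¹)).toWord.getLast? ≠ some (linv c) := by
      rw [_root_.map_inv, getLast?_toWord_inv]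
      intro hsome
      rw [map_linv_eq_some, linv_linv] at hsome
      exact hh hsome
    exact matched_core φ x c hbad k hkx ((FreeGroup.of j)⁻¹) (pair_inv_right hpair0)
      (xf_inv (xf_of hjx)) hh2 hl2

lemma exists_good (hr : 3 ≤ r)
    (hmin : ∀ g : FreeGroup (Fin r), (∑ i, (φ (FreeGroup.of i)).toWord.length) ≤
      ∑ i, (g⁻¹ * φ (FreeGroup.of i) * g).toWord.length) (a b : Fin r × Bool) :
    ∃ E : FreeGroup (Fin r), XF x E ∧ E ≠ 1 ∧
      (φ E).toWord.head? ≠ some a ∧ (φ E).toWord.getLast? ≠ some b := by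
  by_cases hm : b = linv a
  · subst hm
    exact exists_good_matched φ x hr hmin a
  · by_contra hno
    push_neg at hno
    have hall : ∀ E : FreeGroup (Fin r), XF x E → E ≠ 1 →
        (φ E).toWord.head? = some a ∨ (φ E).toWord.getLast? = some b := by
      intro E h1 h2
      by_cases hh : (φ E).toWord.head? = some a
      · exact Or.inl hh
      · exact Or.inr (hno E h1 h2 hh)
    have hmb : a ≠ linv b := by
      intro h0
      apply hm
      rw [h0, linv_linv]
    have hclass : ∀ E : FreeGroup (Fin r), XF x E → E ≠ 1 →
        ((φ E).toWord.head? = some a ∧ (φ E).toWord.getLast? = some (linv a)) ∨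
        ((φ E).toWord.head? = some (linv b) ∧ (φ E).toWord.getLast? = some b) := by
      intro E h1 h2
      have hE := hall E h1 h2
      have hEinv := hall E⁻¹ (xf_inv h1) (inv_ne_one.2 h2)
      rw [_root_.map_inv, head?_toWord_inv, getLast?_toWord_inv] at hEinv
      rcases hE with h3 | h3 <;> rcases hEinv with h4 | h4
      · rw [map_linv_eq_some] at h4
        exact Or.inl ⟨h3, h4⟩
      · rw [map_linv_eq_some] at h4
        rw [h3, Option.some_inj] at h4
        exact absurd h4 hmb
      · rw [map_linv_eq_some] at h4
        rw [h3, Option.some_inj] at h4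
        exact absurd h4 hm
      · rw [map_linv_eq_some] at h4
        exact Or.inr ⟨h4, h3⟩
    by_cases hC1 : ∀ j : Fin r, j ≠ x → ((φ (FreeGroup.of j)).toWord.head? = some a ∧
        (φ (FreeGroup.of j)).toWord.getLast? = some (linv a))
    · exact not_all_both φ x hr hmin a hC1
    · push_neg at hC1
      obtain ⟨j', hj'x, hj'n⟩ := hC1
      have hcl' : (φ (FreeGroup.of j')).toWord.head? = some (linv b) ∧
          (φ (FreeGroup.of j')).toWord.getLast? = some b := by
        rcases hclass (FreeGroup.of j') (xf_of hj'x) (FreeGroup.of_ne_one j') with h' | h'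
        · exact absurd h'.2 (hj'n h'.1)
        · exact h'
      by_cases hC2 : ∀ j : Fin r, j ≠ x → ((φ (FreeGroup.of j)).toWord.head? = some (linv b) ∧
          (φ (FreeGroup.of j)).toWord.getLast? = some b)
      · apply not_all_both φ x hr hmin (linv b)
        intro j hj
        obtain ⟨h5, h6⟩ := hC2 j hj
        rw [linv_linv]
        exact ⟨h5, h6⟩
      · push_neg at hC2
        obtain ⟨j'', hj''x, hj''n⟩ := hC2
        have hcl'' : (φ (FreeGroup.of j'')).toWord.head? = some a ∧
            (φ (FreeGroup.of j'')).toWord.getLast? = some (linv a) := by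
          rcases hclass (FreeGroup.of j'') (xf_of hj''x) (FreeGroup.of_ne_one j'') with h' | h'
          · exact h'
          · exact absurd h'.2 (hj''n h'.1)
        -- the product of the two generators contradicts the classification
        have hW''ne : (φ (FreeGroup.of j'')).toWord ≠ [] := word_ne_nil_of_head hcl''.1
        have hW'ne : (φ (FreeGroup.of j')).toWord ≠ [] := word_ne_nil_of_head hcl'.1
        have hcat : (φ (FreeGroup.of j'' * FreeGroup.of j')).toWord =
            (φ (FreeGroup.of j'')).toWord ++ (φ (FreeGroup.of j')).toWord := by
          rw [_root_.map_mul]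
          apply toWord_mul_of_rw
          apply (rw_toWord _).append (rw_toWord _)
          intro p hp y hy
          rw [Option.mem_def] at hp hy
          rw [hcl''.2, Option.some_inj] at hp
          rw [hcl'.1, Option.some_inj] at hy
          subst hp; subst hy
          intro h0
          rw [linv_linv] at h0
          exact hmb h0.symm
        have hne1 : FreeGroup.of j'' * FreeGroup.of j' ≠ 1 := by
          intro h0
          have h1 : (φ (FreeGroup.of j'' * FreeGroup.of j')).toWord = [] := by
            rw [h0, _root_.map_one, FreeGroup.toWord_one]
          rw [hcat] at h1
          rcases List.append_eq_nil_iff.1 h1 with ⟨h2, -⟩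
          exact hW''ne h2
        have hxfh : XF x (FreeGroup.of j'' * FreeGroup.of j') :=
          xf_mul (xf_of hj''x) (xf_of hj'x)
        have hheadcat : (φ (FreeGroup.of j'' * FreeGroup.of j')).toWord.head? = some a := by
          rw [hcat, List.head?_append_of_ne_nil _ hW''ne, hcl''.1]
        have hlastcat : (φ (FreeGroup.of j'' * FreeGroup.of j')).toWord.getLast? = some b := by
          rw [hcat, List.getLast?_append_of_ne_nil _ hW'ne, hcl'.2]
        rcases hclass _ hxfh hne1 with h' | h'
        · rw [hlastcat, Option.some_inj] at h'
          exact hm h'.2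
        · rw [hheadcat, Option.some_inj] at h'
          exact hmb h'.1

end Main

end Stmt17Aux

open Stmt17Aux in
theorem stmt17' (r : ℕ) (hr : 3 ≤ r) (φ : FreeGroup (Fin r) ≃* FreeGroup (Fin r))
    (hmin : ∀ g : FreeGroup (Fin r), (∑ i, (φ (FreeGroup.of i)).toWord.length) ≤
      ∑ i, (g⁻¹ * φ (FreeGroup.of i) * g).toWord.length)
    (w : FreeGroup (Fin r)) (x : Fin r)
    (hx : (w.toWord.countP fun p => decide (p.1 = x)) ≤ 1)
    (v : FreeGroup (Fin r))
    (hPB : ∀ u : FreeGroup (Fin r),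
      (∃ (ψ : FreeGroup (Fin r) ≃* FreeGroup (Fin r)) (i : Fin r), ψ (FreeGroup.of i) = u) →
      (∀ a ∈ u.toWord.head?, ∀ b ∈ u.toWord.getLast?, a ≠ (b.1, !b.2)) →
      ¬ (v.toWord <:+: u.toWord))
    (hsub : v.toWord <:+: (φ w).toWord) : False := by
  classical
  by_cases hM : (φ w).toWord = []
  · -- v = 1, contradiction with any cyclically reduced primitive, e.g. `of x`
    rcases hsub with ⟨s, t, hst⟩
    rw [hM] at hst
    have h1 := List.append_eq_nil_iff.1 hst
    have h2 := List.append_eq_nil_iff.1 h1.1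
    refine hPB (FreeGroup.of x) ⟨MulEquiv.refl _, x, rfl⟩ ?_ ?_
    · intro a ha b hb
      rw [FreeGroup.toWord_of] at ha hb
      simp only [List.head?_cons, Option.mem_def, Option.some_inj] at ha
      simp only [List.getLast?_singleton, Option.mem_def, Option.some_inj] at hb
      subst ha; subst hb
      intro hcon
      have := congrArg Prod.snd hcon
      simp at this
    · rw [h2.2, FreeGroup.toWord_of]
      exact List.nil_infix
  · -- M nonempty
    have haM : (φ w).toWord.getLast? = some ((φ w).toWord.getLast hM) :=
      List.getLast?_eq_getLast hM
    have hbM : (φ w).toWord.head? = some ((φ w).toWord.head hM) := List.head?_eq_head hM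
    set aM := (φ w).toWord.getLast hM with haMdef
    set bM := (φ w).toWord.head hM with hbMdef
    rcases Nat.le_one_iff_eq_zero_or_eq_one.1 hx with h0 | h1
    · -- CASE 0 : x does not occur in w
      have hxfw : XF x w := by
        intro p hp
        have := List.countP_eq_zero.1 h0 p hp
        simpa using this
      have hUne : (φ (FreeGroup.of x)).toWord ≠ [] := by
        intro h
        exact phi_of_ne_one φ x (FreeGroup.toWord_eq_nil_iff.1 h)
      have hUh : (φ (FreeGroup.of x)).toWord.head? =
          some ((φ (FreeGroup.of x)).toWord.head hUne) := List.head?_eq_head hUne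
      have hUl : (φ (FreeGroup.of x)).toWord.getLast? =
          some ((φ (FreeGroup.of x)).toWord.getLast hUne) :=
        List.getLast?_eq_getLast hUne
      set uxh := (φ (FreeGroup.of x)).toWord.head hUne with huxh
      set uxl := (φ (FreeGroup.of x)).toWord.getLast hUne with huxl
      obtain ⟨E₁, hE₁xf, hE₁ne, hE₁h, hE₁l⟩ := exists_good φ x hr hmin (linv aM) (linv uxh)
      obtain ⟨E₂, hE₂xf, hE₂ne, hE₂h, hE₂l⟩ := exists_good φ x hr hmin (linv uxl) (linv bM)
      have hB₁ne : (φ E₁).toWord ≠ [] := by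
        intro h
        exact hE₁ne (φ.injective (by rw [FreeGroup.toWord_eq_nil_iff.1 h, _root_.map_one]))
      have hB₂ne : (φ E₂).toWord ≠ [] := by
        intro h
        exact hE₂ne (φ.injective (by rw [FreeGroup.toWord_eq_nil_iff.1 h, _root_.map_one]))
      -- step 1
      have h1 : (φ w * φ E₁).toWord = (φ w).toWord ++ (φ E₁).toWord := by
        apply toWord_mul_of_rw
        apply (rw_toWord _).append (rw_toWord _)
        intro p hp y hy
        rw [Option.mem_def, haM, Option.some_inj] at hp
        intro hcon
        apply hE₁h
        rw [Option.mem_def] at hy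
        rw [hy, hcon, hp]
      have hrw1 : RW ((φ w).toWord ++ (φ E₁).toWord) := by
        have := rw_toWord (φ w * φ E₁); rwa [h1] at this
      -- step 2
      have hj2 : ∀ p ∈ ((φ w).toWord ++ (φ E₁).toWord).getLast?,
          ∀ y ∈ (φ (FreeGroup.of x)).toWord.head?, Rel p y := by
        intro p hp y hy
        rw [List.getLast?_append_of_ne_nil _ hB₁ne] at hp
        rw [Option.mem_def, hUh, Option.some_inj] at hy
        intro hcon
        apply hE₁l
        rw [Option.mem_def] at hp
        rw [hp]
        rw [← hy] at hcon
        rw [hcon, linv_linv]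
      have h2 : (φ w * φ E₁ * φ (FreeGroup.of x)).toWord
          = (φ w).toWord ++ (φ E₁).toWord ++ (φ (FreeGroup.of x)).toWord := by
        have := toWord_mul_of_rw (g := φ w * φ E₁) (h := φ (FreeGroup.of x))
          (by rw [h1]; exact hrw1.append (rw_toWord _) hj2)
        rw [this, h1]
      have hrw2 : RW ((φ w).toWord ++ (φ E₁).toWord ++ (φ (FreeGroup.of x)).toWord) := by
        have := rw_toWord (φ w * φ E₁ * φ (FreeGroup.of x)); rwa [h2] at this
      -- step 3
      have hj3 : ∀ p ∈ ((φ w).toWord ++ (φ E₁).toWord ++ (φ (FreeGroup.of x)).toWord).getLast?,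
          ∀ y ∈ (φ E₂).toWord.head?, Rel p y := by
        intro p hp y hy
        rw [List.getLast?_append_of_ne_nil _ hUne] at hp
        rw [Option.mem_def, hUl, Option.some_inj] at hp
        intro hcon
        apply hE₂h
        rw [Option.mem_def] at hy
        rw [hy, hcon, hp]
      have h3 : (φ w * φ E₁ * φ (FreeGroup.of x) * φ E₂).toWord
          = (φ w).toWord ++ (φ E₁).toWord ++ (φ (FreeGroup.of x)).toWord ++ (φ E₂).toWord := by
        have := toWord_mul_of_rw (g := φ w * φ E₁ * φ (FreeGroup.of x)) (h := φ E₂)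
          (by rw [h2]; exact hrw2.append (rw_toWord _) hj3)
        rw [this, h2]
      have hfull : (φ (w * E₁ * FreeGroup.of x * E₂)).toWord
          = (φ w).toWord ++ (φ E₁).toWord ++ (φ (FreeGroup.of x)).toWord ++ (φ E₂).toWord := by
        rw [_root_.map_mul, _root_.map_mul, _root_.map_mul]; exact h3
      -- primitive
      have hxfC : XF x (w * E₁) := xf_mul hxfw hE₁xf
      refine hPB (φ (w * E₁ * FreeGroup.of x * E₂))
        ⟨(nielsen x true (w * E₁) E₂ hxfC hE₂xf).trans φ, x, ?_⟩ ?_ ?_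
      · rw [MulEquiv.trans_apply, nielsen_of]
        rfl
      · -- cyclically reduced
        intro a ha b hb
        rw [hfull] at ha hb
        rw [List.head?_append_of_ne_nil, List.head?_append_of_ne_nil,
          List.head?_append_of_ne_nil _ hM] at ha
        · rw [List.getLast?_append_of_ne_nil _ hB₂ne] at hb
          rw [Option.mem_def, hbM, Option.some_inj] at ha
          intro hcon
          apply hE₂l
          rw [Option.mem_def] at hb
          rw [hb]
          have hcon' : linv b = bM := (ha.trans hcon).symm
          exact congrArg some (linv_eq_iff.1 hcon')
        · intro hcon
          rcases List.append_eq_nil_iff.1 hcon with ⟨hc1, -⟩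
          exact hM hc1
        · intro hcon
          rcases List.append_eq_nil_iff.1 hcon with ⟨hc1, -⟩
          rcases List.append_eq_nil_iff.1 hc1 with ⟨hc2, -⟩
          exact hM hc2
      · -- subword
        rw [hfull]
        refine hsub.trans ?_
        have hpre : (φ w).toWord <+:
            (φ w).toWord ++ (φ E₁).toWord ++ (φ (FreeGroup.of x)).toWord ++ (φ E₂).toWord := by
          rw [List.append_assoc, List.append_assoc]
          exact List.prefix_append _ _
        exact hpre.isInfix
    · -- CASE 1 : x occurs exactly once in w
      obtain ⟨L₁, p, L₂, hLsplit, hpx, hL₁, hL₂⟩ :=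
        count_one_split (fun p : Fin r × Bool => decide (p.1 = x)) w.toWord h1
      obtain ⟨p1, pb⟩ := p
      have hp1 : p1 = x := by simpa using hpx
      rw [hp1] at hLsplit
      have hrww := rw_toWord w
      rw [hLsplit] at hrww
      have hsplit' : RW L₁ ∧ RW ((x, pb) :: L₂) := by
        have := List.isChain_append.1 hrww
        exact ⟨this.1, this.2.1⟩
      have hrwL₁ : RW L₁ := hsplit'.1
      have hrwL₂ : RW L₂ := hsplit'.2.tail
      have hCword : (FreeGroup.mk L₁).toWord = L₁ := toWord_mk_of_rw hrwL₁
      have hDword : (FreeGroup.mk L₂).toWord = L₂ := toWord_mk_of_rw hrwL₂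
      have hxfC : XF x (FreeGroup.mk L₁) := xf_mk (by
        intro q hq
        have := hL₁ q hq
        simpa using this)
      have hxfD : XF x (FreeGroup.mk L₂) := xf_mk (by
        intro q hq
        have := hL₂ q hq
        simpa using this)
      have hw : w = FreeGroup.mk L₁ * FreeGroup.mk [(x, pb)] * FreeGroup.mk L₂ := by
        rw [mul_mk, mul_mk]
        conv_lhs => rw [← mk_toWord (x := w), hLsplit]
        rw [List.append_assoc, List.singleton_append]
      obtain ⟨E₁, hE₁xf, hE₁ne, hE₁h, hE₁l⟩ := exists_good φ x hr hmin (linv aM) (linv bM)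
      have hB₁ne : (φ E₁).toWord ≠ [] := by
        intro h
        exact hE₁ne (φ.injective (by rw [FreeGroup.toWord_eq_nil_iff.1 h, _root_.map_one]))
      have h1' : (φ w * φ E₁).toWord = (φ w).toWord ++ (φ E₁).toWord := by
        apply toWord_mul_of_rw
        apply (rw_toWord _).append (rw_toWord _)
        intro q hq y hy
        rw [Option.mem_def, haM, Option.some_inj] at hq
        intro hcon
        apply hE₁h
        rw [Option.mem_def] at hy
        rw [hy, hcon, hq]
      have hfull : (φ (w * E₁)).toWord = (φ w).toWord ++ (φ E₁).toWord := by
        rw [_root_.map_mul]; exact h1'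
      refine hPB (φ (w * E₁))
        ⟨(nielsen x pb (FreeGroup.mk L₁) (FreeGroup.mk L₂ * E₁) hxfC
          (xf_mul hxfD hE₁xf)).trans φ, x, ?_⟩ ?_ ?_
      · rw [MulEquiv.trans_apply, nielsen_of]
        congr 1
        rw [hw]
        group
      · intro a ha b hb
        rw [hfull] at ha hb
        rw [List.head?_append_of_ne_nil _ hM] at ha
        rw [List.getLast?_append_of_ne_nil _ hB₁ne] at hb
        rw [Option.mem_def, hbM, Option.some_inj] at ha
        intro hcon
        apply hE₁l
        rw [Option.mem_def] at hb
        rw [hb]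
        have hcon' : linv b = bM := (ha.trans hcon).symm
        exact congrArg some (linv_eq_iff.1 hcon')
      · rw [hfull]
        exact hsub.trans (List.prefix_append _ _).isInfix

/-- the image of a slender word under a conjugacy-length-minimal
automorphism contains no primitivity-blocking subword. -/
theorem stmt17 (r : ℕ) (hr : 3 ≤ r) (φ : F r ≃* F r)
    (hmin : ∀ g : F r, (∑ i, len (φ (FreeGroup.of i))) ≤
      ∑ i, len (g⁻¹ * φ (FreeGroup.of i) * g))
    (w : F r) (hs : Slender w) :
    ∀ v : F r, PrimitivityBlocking v → ¬ Subword v (φ w) := by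
  intro v hPB hsub
  obtain ⟨x, hx⟩ := hs
  have hmin' : ∀ g : F r, (∑ i, (φ (FreeGroup.of i)).toWord.length) ≤
      ∑ i, (g⁻¹ * φ (FreeGroup.of i) * g).toWord.length := by
    intro g
    simpa [len] using hmin g
  exact stmt17' r hr φ hmin' w x hx v (fun u hp hc hs' => hPB u hp hc hs') hsub
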